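/- (Theorem 5, part 2b.) Consider a compound geometrically uniform state set with geometrically uniform generators whose representations commute up to a phase factor: for all g ∈ G, k ∈ Q there exists θ(g,k) ∈ ℝ with ρ(g)τ(k) = e^{iθ(g,k)} τ(k)ρ(g). Assume the states φ_{g,k} = ρ(g)τ(k)φ are linearly independent and the prior probabilities are equal, η_{g,k} = 1/(|G|·|Q|). Then the equal-probability measurement minimizes the probability of an inconclusive result: the constant vector p = λ_min is primal feasible, and (1/(|G|·|Q|))·Σ_{g,k} p_{g,k} ≤ λ_min for every primal feasible p, where λ_min is the smallest eigenvalue of the Gram matrix ΦᴴΦ. -/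

import Mathlib

open Matrix BigOperators ComplexOrder

noncomputable section

/-- The matrix whose column indexed by `(g, k)` is the state `ρ(g) τ(k) φ`
(a CGU state set with GU generators). -/
def cguMatrix {G Q : Type*} [Group G] [Fintype G] [Group Q] [Fintype Q] (n : ℕ)
    (ρ : G →* Matrix.unitaryGroup (Fin n) ℂ) (τ : Q →* Matrix.unitaryGroup (Fin n) ℂ)
    (φ : Fin n → ℂ) : Matrix (Fin n) (G × Q) ℂ :=
  Matrix.of fun j gk =>
    (((ρ gk.1 : Matrix (Fin n) (Fin n) ℂ) * (τ gk.2 : Matrix (Fin n) (Fin n) ℂ)).mulVec φ) j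

/-- The reciprocal states: columns of `Φ (ΦᴴΦ)⁻¹`. -/
def cguReciprocal {G Q : Type*} [Group G] [Fintype G] [DecidableEq G]
    [Group Q] [Fintype Q] [DecidableEq Q] (n : ℕ)
    (ρ : G →* Matrix.unitaryGroup (Fin n) ℂ) (τ : Q →* Matrix.unitaryGroup (Fin n) ℂ)
    (φ : Fin n → ℂ) : Matrix (Fin n) (G × Q) ℂ :=
  cguMatrix n ρ τ φ * ((cguMatrix n ρ τ φ)ᴴ * cguMatrix n ρ τ φ)⁻¹

/-- The rank-one operator `Q_{g,k} = φ̃_{g,k} φ̃_{g,k}ᴴ`. -/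
def cguQop {G Q : Type*} [Group G] [Fintype G] [DecidableEq G]
    [Group Q] [Fintype Q] [DecidableEq Q] (n : ℕ)
    (ρ : G →* Matrix.unitaryGroup (Fin n) ℂ) (τ : Q →* Matrix.unitaryGroup (Fin n) ℂ)
    (φ : Fin n → ℂ) (gk : G × Q) : Matrix (Fin n) (Fin n) ℂ :=
  vecMulVec (fun a => cguReciprocal n ρ τ φ a gk) (fun b => star (cguReciprocal n ρ τ φ b gk))

/-- Primal feasibility for the CGU unambiguous-discrimination SDP. -/
def cguPrimalFeasible {G Q : Type*} [Group G] [Fintype G] [DecidableEq G]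
    [Group Q] [Fintype Q] [DecidableEq Q] (n : ℕ)
    (ρ : G →* Matrix.unitaryGroup (Fin n) ℂ) (τ : Q →* Matrix.unitaryGroup (Fin n) ℂ)
    (φ : Fin n → ℂ) (p : G × Q → ℝ) : Prop :=
  (∀ gk, 0 ≤ p gk) ∧
    ((1 : Matrix (Fin n) (Fin n) ℂ) -
      ∑ gk : G × Q, (p gk : ℂ) • cguQop n ρ τ φ gk).PosSemidef

theorem gram_posDef {m k : Type*} [Fintype m] [Fintype k] [DecidableEq k]
    (A : Matrix m k ℂ) (hind : LinearIndependent ℂ (fun j : k => fun i => A i j)) :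
    (Aᴴ * A).PosDef := by
  rw [posDef_iff_dotProduct_mulVec]
  constructor
  · exact isHermitian_conjTranspose_mul_self A
  · intro x hx
    have hAx : A.mulVec x ≠ 0 := by
      intro h
      apply hx
      have := Fintype.linearIndependent_iff.mp hind x ?_
      · funext i; exact this i
      · funext i
        have := congrFun h i
        simpa [Matrix.mulVec, dotProduct, mul_comm, Finset.sum_apply] using this
    rw [← mulVec_mulVec, dotProduct_mulVec, vecMul_conjTranspose, star_star]
    exact (dotProduct_star_self_nonneg _).lt_of_ne' (by
      simpa [dotProduct_star_self_eq_zero] using hAx)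

theorem feas_matrix {m k : Type*} [Fintype m] [Fintype k] [DecidableEq k] [DecidableEq m]
    (A : Matrix m k ℂ) (lam : ℝ) (hpd : (Aᴴ * A).PosDef)
    (hmin : ((Aᴴ * A) - (lam:ℂ) • 1).PosSemidef) :
    ((1 : Matrix m m ℂ) - (lam:ℂ) • (A * (Aᴴ*A)⁻¹ * ((A * (Aᴴ*A)⁻¹)ᴴ))).PosSemidef := by
  set S := Aᴴ * A with hS
  have hdet : IsUnit S.det := (Matrix.isUnit_iff_isUnit_det S).mp hpd.isUnit
  have h1 : S * S⁻¹ = 1 := Matrix.mul_nonsing_inv S hdet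
  have h2 : S⁻¹ * S = 1 := Matrix.nonsing_inv_mul S hdet
  have hSiH : S⁻¹ᴴ = S⁻¹ := (hpd.isHermitian.inv : (S⁻¹).IsHermitian)
  set R := A * S⁻¹ with hR
  have hRH : Rᴴ = S⁻¹ * Aᴴ := by rw [hR, conjTranspose_mul, hSiH]
  set P := A * S⁻¹ * Aᴴ with hP
  have hRSR : R * S * Rᴴ = P := by
    rw [hR, hRH, hP]
    calc A * S⁻¹ * S * (S⁻¹ * Aᴴ) = A * ((S⁻¹ * S) * S⁻¹) * Aᴴ := by
          simp only [Matrix.mul_assoc]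
      _ = A * S⁻¹ * Aᴴ := by rw [h2, Matrix.one_mul, Matrix.mul_assoc]
  have hPP : P * P = P := by
    rw [hP]
    calc A * S⁻¹ * Aᴴ * (A * S⁻¹ * Aᴴ) = A * (S⁻¹ * (Aᴴ * A) * S⁻¹) * Aᴴ := by
          simp only [Matrix.mul_assoc]
      _ = A * (S⁻¹ * S * S⁻¹) * Aᴴ := by rw [hS]
      _ = A * S⁻¹ * Aᴴ := by rw [h2, Matrix.one_mul, Matrix.mul_assoc]
  have hPH : Pᴴ = P := by
    rw [hP, conjTranspose_mul, conjTranspose_mul, conjTranspose_conjTranspose, hSiH,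
      ← Matrix.mul_assoc]
  have key : (1 : Matrix m m ℂ) - (lam:ℂ) • (R * Rᴴ)
      = (1 - P) * (1 - P)ᴴ + R * (S - (lam:ℂ) • 1) * Rᴴ := by
    have e1 : R * ((lam:ℂ) • (1: Matrix k k ℂ)) * Rᴴ = (lam:ℂ) • (R * Rᴴ) := by
      rw [Matrix.mul_smul, Matrix.mul_one, Matrix.smul_mul]
    simp only [conjTranspose_sub, conjTranspose_one, hPH, Matrix.mul_sub, Matrix.sub_mul,
      Matrix.one_mul, Matrix.mul_one, hPP, e1, hRSR]
    abel
  rw [key]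
  exact ((Matrix.posSemidef_self_mul_conjTranspose (1 - P)).add
    (hmin.mul_mul_conjTranspose_same R))

theorem cgu_cov {G Q : Type*} [Group G] [Fintype G] [DecidableEq G]
    [Group Q] [Fintype Q] [DecidableEq Q] (n : ℕ)
    (ρ : G →* Matrix.unitaryGroup (Fin n) ℂ) (τ : Q →* Matrix.unitaryGroup (Fin n) ℂ)
    (φ : Fin n → ℂ)
    (hcomm : ∀ (g : G) (k : Q), ∃ θ : ℝ,
      (ρ g : Matrix (Fin n) (Fin n) ℂ) * (τ k : Matrix (Fin n) (Fin n) ℂ) =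
        Complex.exp (θ * Complex.I) •
          ((τ k : Matrix (Fin n) (Fin n) ℂ) * (ρ g : Matrix (Fin n) (Fin n) ℂ)))
    (lam : ℝ) (u : G × Q → ℂ)
    (hu : ((cguMatrix n ρ τ φ)ᴴ * cguMatrix n ρ τ φ) *ᵥ u = (lam : ℂ) • u)
    (h : G) (l : Q) :
    ∃ w : G × Q → ℂ,
      ((cguMatrix n ρ τ φ)ᴴ * cguMatrix n ρ τ φ) *ᵥ w = (lam : ℂ) • w ∧
      ∀ gk : G × Q, Complex.normSq (w gk) = Complex.normSq (u (h⁻¹ * gk.1, l⁻¹ * gk.2)) := by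
  classical
  set Φ := cguMatrix n ρ τ φ with hΦ
  -- the phases
  have hθ : ∀ g : G, ∃ c : ℂ, c * (starRingEnd ℂ) c = 1 ∧
      (τ l : Matrix (Fin n) (Fin n) ℂ) * (ρ g : Matrix (Fin n) (Fin n) ℂ) =
        c • ((ρ g : Matrix (Fin n) (Fin n) ℂ) * (τ l : Matrix (Fin n) (Fin n) ℂ)) := by
    intro g
    obtain ⟨θ, hθ⟩ := hcomm g l
    refine ⟨Complex.exp (-θ * Complex.I), ?_, ?_⟩
    · rw [← Complex.exp_conj]
      rw [← Complex.exp_add]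
      simp [Complex.ext_iff]
    · rw [hθ, smul_smul, ← Complex.exp_add]
      have : (-θ : ℂ) * Complex.I + θ * Complex.I = 0 := by ring
      rw [this, Complex.exp_zero, one_smul]
  choose c hc1 hc2 using hθ
  set W : Matrix (Fin n) (Fin n) ℂ := ((ρ h * τ l : Matrix.unitaryGroup (Fin n) ℂ) : Matrix (Fin n) (Fin n) ℂ) with hW
  set V : Matrix (G × Q) (G × Q) ℂ :=
    Matrix.of (fun ab gk : G × Q => if ab = (h * gk.1, l * gk.2) then c gk.1 else 0) with hV
  -- (a) Φ * V = W * Φ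
  have ha : Φ * V = W * Φ := by
    ext j gk
    rw [Matrix.mul_apply, Matrix.mul_apply]
    have : ∀ ab : G × Q, Φ j ab * V ab gk =
        if ab = (h * gk.1, l * gk.2) then Φ j ab * c gk.1 else 0 := by
      intro ab
      simp only [hV, Matrix.of_apply]
      split <;> simp
    rw [Finset.sum_congr rfl (fun ab _ => this ab), Finset.sum_ite_eq' Finset.univ]
    simp only [Finset.mem_univ, if_true]
    -- LHS: Φ j (h*g, l*k) * c g ; RHS : Σ m, W j m * Φ m gk
    have hcol : ∀ m, Φ m gk = (((ρ gk.1 : Matrix (Fin n) (Fin n) ℂ) * (τ gk.2 : Matrix (Fin n) (Fin n) ℂ)) *ᵥ φ) m := fun m => rfl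
    have : ∑ m, W j m * Φ m gk = ((W * ((ρ gk.1 : Matrix (Fin n) (Fin n) ℂ) * (τ gk.2 : Matrix (Fin n) (Fin n) ℂ))) *ᵥ φ) j := by
      rw [← Matrix.mulVec_mulVec]
      rw [Matrix.mulVec]
      rfl
    rw [this]
    have hmat : W * ((ρ gk.1 : Matrix (Fin n) (Fin n) ℂ) * (τ gk.2 : Matrix (Fin n) (Fin n) ℂ))
        = c gk.1 • (((ρ (h * gk.1) : Matrix (Fin n) (Fin n) ℂ)) * (τ (l * gk.2) : Matrix (Fin n) (Fin n) ℂ)) := by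
      rw [hW]
      simp only [_root_.map_mul, MulMemClass.coe_mul]
      rw [show ((ρ h : Matrix (Fin n) (Fin n) ℂ) * τ l) * ((ρ gk.1 : Matrix (Fin n) (Fin n) ℂ) * τ gk.2)
          = (ρ h : Matrix (Fin n) (Fin n) ℂ) * ((τ l : Matrix (Fin n) (Fin n) ℂ) * ρ gk.1) * τ gk.2 by
        simp only [Matrix.mul_assoc]]
      rw [hc2 gk.1]
      rw [Matrix.mul_smul, Matrix.smul_mul]
      simp only [Matrix.mul_assoc]
    rw [show (ρ (h*gk.1) : Matrix (Fin n) (Fin n) ℂ) = (ρ h : Matrix (Fin n) (Fin n) ℂ) * ρ gk.1 by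
        simp [_root_.map_mul], show (τ (l*gk.2) : Matrix (Fin n) (Fin n) ℂ) = (τ l : Matrix (Fin n) (Fin n) ℂ) * τ gk.2 by
        simp [_root_.map_mul]] at hmat
    rw [hmat, Matrix.smul_mulVec]
    have h5 : Φ j (h * gk.1, l * gk.2) = (((ρ (h*gk.1) : Matrix (Fin n) (Fin n) ℂ) * (τ (l*gk.2) : Matrix (Fin n) (Fin n) ℂ)) *ᵥ φ) j := rfl
    rw [h5, show (ρ (h*gk.1) : Matrix (Fin n) (Fin n) ℂ) = (ρ h : Matrix (Fin n) (Fin n) ℂ) * ρ gk.1 by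
        simp [_root_.map_mul], show (τ (l*gk.2) : Matrix (Fin n) (Fin n) ℂ) = (τ l : Matrix (Fin n) (Fin n) ℂ) * τ gk.2 by
        simp [_root_.map_mul]]
    simp [mul_comm, Matrix.mul_assoc]
  -- condition flip helper
  have hflip : ∀ (ab gk : G × Q), (ab = (h * gk.1, l * gk.2)) ↔ (gk = (h⁻¹ * ab.1, l⁻¹ * ab.2)) := by
    intro ab gk
    constructor
    · rintro rfl; simp
    · rintro rfl; simp
  -- (b) V is unitary
  have hVV : V * Vᴴ = 1 := by
    ext ab ab'
    rw [Matrix.mul_apply]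
    simp only [hV, Matrix.conjTranspose_apply, Matrix.of_apply]
    simp only [hflip ab, hflip ab']
    simp only [Matrix.one_apply]
    rcases eq_or_ne ab ab' with rfl | hne
    · simp only [if_pos rfl]
      rw [Finset.sum_eq_single ((h⁻¹ * ab.1, l⁻¹ * ab.2) : G × Q)]
      · simp only [if_pos rfl]
        simpa using hc1 _
      · intro b _ hb
        simp [if_neg hb]
      · simp
    · rw [if_neg hne, Finset.sum_eq_zero]
      intro gk _
      by_cases hgk : gk = ((h⁻¹ * ab.1, l⁻¹ * ab.2) : G × Q)
      · subst hgk
        have hne2 : ((h⁻¹ * ab.1, l⁻¹ * ab.2) : G × Q) ≠ (h⁻¹ * ab'.1, l⁻¹ * ab'.2) := by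
          intro hEq
          apply hne
          rw [Prod.ext_iff] at hEq ⊢
          obtain ⟨h1, h2⟩ := hEq
          exact ⟨mul_left_cancel h1, mul_left_cancel h2⟩
        simp only [if_neg hne2, star_zero, mul_zero]
      · simp [if_neg hgk]
  -- W is unitary
  have hWW : Wᴴ * W = 1 := by
    rw [hW, ← Matrix.star_eq_conjTranspose]
    exact (Unitary.mem_iff.mp (ρ h * τ l).2).1
  -- S commutes with V
  have hcommSV : (Φᴴ * Φ) * V = V * (Φᴴ * Φ) := by
    have h2 : Vᴴ * Φᴴ = Φᴴ * Wᴴ := by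
      rw [← Matrix.conjTranspose_mul, ha, Matrix.conjTranspose_mul]
    have h3 : Φᴴ = V * Φᴴ * Wᴴ := by
      calc Φᴴ = (V * Vᴴ) * Φᴴ := by rw [hVV, Matrix.one_mul]
        _ = V * (Vᴴ * Φᴴ) := by rw [Matrix.mul_assoc]
        _ = V * (Φᴴ * Wᴴ) := by rw [h2]
        _ = V * Φᴴ * Wᴴ := by rw [Matrix.mul_assoc]
    have h4 : V * Φᴴ = Φᴴ * W := by
      calc V * Φᴴ = V * Φᴴ * (Wᴴ * W) := by rw [hWW, Matrix.mul_one]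
        _ = (V * Φᴴ * Wᴴ) * W := by simp only [Matrix.mul_assoc]
        _ = Φᴴ * W := by rw [← h3]
    calc (Φᴴ * Φ) * V = Φᴴ * (Φ * V) := by rw [Matrix.mul_assoc]
      _ = Φᴴ * (W * Φ) := by rw [ha]
      _ = (Φᴴ * W) * Φ := by rw [Matrix.mul_assoc]
      _ = (V * Φᴴ) * Φ := by rw [h4]
      _ = V * (Φᴴ * Φ) := by rw [Matrix.mul_assoc]
  refine ⟨V *ᵥ u, ?_, ?_⟩
  · rw [Matrix.mulVec_mulVec, hcommSV, ← Matrix.mulVec_mulVec, hu, Matrix.mulVec_smul]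
  · intro gk
    have hw : (V *ᵥ u) gk = c (h⁻¹ * gk.1) * u (h⁻¹ * gk.1, l⁻¹ * gk.2) := by
      rw [Matrix.mulVec]
      show (∑ ab, V gk ab * u ab) = _
      rw [Finset.sum_eq_single ((h⁻¹ * gk.1, l⁻¹ * gk.2) : G × Q)]
      · simp only [hV, Matrix.of_apply, hflip]
        simp
      · intro b _ hb
        simp only [hV, Matrix.of_apply, hflip]
        rw [if_neg (by simpa [eq_comm] using hb), zero_mul]
      · simp
    rw [hw, Complex.normSq_mul]
    have : Complex.normSq (c (h⁻¹ * gk.1)) = 1 := by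
      have := hc1 (h⁻¹ * gk.1)
      rw [Complex.mul_conj] at this
      exact_mod_cast this
    rw [this, one_mul]

theorem key_ineq {m k : Type*} [Fintype m] [Fintype k] [DecidableEq k] [DecidableEq m]
    (A : Matrix m k ℂ) (hpd : (Aᴴ * A).PosDef) (lam : ℝ) (hlam : 0 < lam)
    (p : k → ℝ)
    (hfeas : ((1 : Matrix m m ℂ) - ∑ j : k, (p j : ℂ) •
        vecMulVec (fun a => (A * (Aᴴ * A)⁻¹) a j)
          (fun b => star ((A * (Aᴴ * A)⁻¹) b j))).PosSemidef)
    (w : k → ℂ) (hw : (Aᴴ * A) *ᵥ w = (lam : ℂ) • w) :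
    ∑ j : k, p j * Complex.normSq (w j) ≤ lam * ∑ j : k, Complex.normSq (w j) := by
  set S := Aᴴ * A with hS
  have hdet : IsUnit S.det := (Matrix.isUnit_iff_isUnit_det S).mp hpd.isUnit
  have h2 : S⁻¹ * S = 1 := Matrix.nonsing_inv_mul S hdet
  have hSiH : S⁻¹ᴴ = S⁻¹ := (hpd.isHermitian.inv : (S⁻¹).IsHermitian)
  set R := A * S⁻¹ with hR
  have hRH : Rᴴ = S⁻¹ * Aᴴ := by rw [hR, conjTranspose_mul, hSiH]
  have hRR : Rᴴ * R = S⁻¹ := by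
    rw [hRH, hR]
    calc S⁻¹ * Aᴴ * (A * S⁻¹) = S⁻¹ * (Aᴴ * A) * S⁻¹ := by simp only [Matrix.mul_assoc]
      _ = S⁻¹ := by rw [← hS, h2, Matrix.one_mul]
  have hSw : S⁻¹ *ᵥ w = ((lam : ℂ)⁻¹) • w := by
    have h3 : S⁻¹ *ᵥ (S *ᵥ w) = w := by rw [Matrix.mulVec_mulVec, h2, Matrix.one_mulVec]
    rw [hw, Matrix.mulVec_smul] at h3
    have hlne : (lam : ℂ) ≠ 0 := by exact_mod_cast hlam.ne'
    calc S⁻¹ *ᵥ w = (lam : ℂ)⁻¹ • ((lam : ℂ) • (S⁻¹ *ᵥ w)) := by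
          rw [smul_smul, inv_mul_cancel₀ hlne, one_smul]
      _ = (lam : ℂ)⁻¹ • w := by rw [h3]
  set x := R *ᵥ w with hx
  have ht : Rᴴ *ᵥ x = ((lam : ℂ)⁻¹) • w := by
    rw [hx, Matrix.mulVec_mulVec, hRR, hSw]
  have htj : ∀ j, (Rᴴ *ᵥ x) j = (lam : ℂ)⁻¹ * w j := by
    intro j; rw [ht]; simp
  have hxx : star x ⬝ᵥ x = (lam : ℂ)⁻¹ * (star w ⬝ᵥ w) := by
    calc star x ⬝ᵥ x = (star w ᵥ* Rᴴ) ⬝ᵥ x := by rw [hx, star_mulVec]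
      _ = star w ⬝ᵥ (Rᴴ *ᵥ x) := (Matrix.dotProduct_mulVec _ _ _).symm
      _ = (lam : ℂ)⁻¹ * (star w ⬝ᵥ w) := by rw [ht, dotProduct_smul, smul_eq_mul]
  have hQx : ∀ j : k, star x ⬝ᵥ ((vecMulVec (fun a => R a j) (fun b => star (R b j))) *ᵥ x)
      = ((lam : ℂ)⁻¹ * (lam : ℂ)⁻¹) * (Complex.normSq (w j) : ℂ) := by
    intro j
    have hb : (fun b => star (R b j)) ⬝ᵥ x = (Rᴴ *ᵥ x) j := by
      simp [Matrix.mulVec, dotProduct, Matrix.conjTranspose_apply]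
    have hmv : (vecMulVec (fun a => R a j) (fun b => star (R b j))) *ᵥ x
        = ((Rᴴ *ᵥ x) j) • (fun a => R a j) := by
      ext i
      simp only [Matrix.mulVec, Matrix.vecMulVec_apply, dotProduct, Pi.smul_apply,
        smul_eq_mul] at *
      rw [← hb, Finset.sum_mul]
      exact Finset.sum_congr rfl fun _ _ => by ring
    rw [hmv, dotProduct_smul, smul_eq_mul, htj]
    have hsb : star x ⬝ᵥ (fun a => R a j) = star ((Rᴴ *ᵥ x) j) := by
      simp [Matrix.mulVec, dotProduct, Matrix.conjTranspose_apply, Finset.sum_comm,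
        mul_comm, star_sum]
    rw [hsb, htj]
    have : (starRingEnd ℂ) ((lam:ℂ)⁻¹ * w j) = (lam:ℂ)⁻¹ * (starRingEnd ℂ) (w j) := by
      simp [_root_.map_mul, Complex.conj_ofReal]
    rw [show star ((lam:ℂ)⁻¹ * w j) = (starRingEnd ℂ) ((lam:ℂ)⁻¹ * w j) from rfl, this]
    rw [show ((Complex.normSq (w j) : ℂ)) = w j * (starRingEnd ℂ) (w j) from (Complex.mul_conj _).symm]
    ring
  have h0 := (posSemidef_iff_dotProduct_mulVec.mp hfeas).2 x
  have hmain : star x ⬝ᵥ (((1 : Matrix m m ℂ) - ∑ j : k, (p j : ℂ) •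
      vecMulVec (fun a => R a j) (fun b => star (R b j))) *ᵥ x)
      = (((lam⁻¹ * ∑ j, Complex.normSq (w j)) - ∑ j, p j * (lam⁻¹ * lam⁻¹ * Complex.normSq (w j)) : ℝ) : ℂ) := by
    rw [Matrix.sub_mulVec, dotProduct_sub, Matrix.one_mulVec]
    have hsumv : (∑ j : k, (p j : ℂ) • vecMulVec (fun a => R a j) (fun b => star (R b j))) *ᵥ x
        = ∑ j : k, (p j : ℂ) • ((vecMulVec (fun a => R a j) (fun b => star (R b j))) *ᵥ x) := by
      ext i
      simp [Matrix.mulVec, dotProduct, Finset.sum_apply, Matrix.sum_apply,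
        Finset.sum_mul, Finset.mul_sum]
      rw [Finset.sum_comm]
      exact Finset.sum_congr rfl fun _ _ => Finset.sum_congr rfl fun _ _ => mul_assoc _ _ _
    rw [hsumv]
    have hds : star x ⬝ᵥ (∑ j : k, (p j : ℂ) • ((vecMulVec (fun a => R a j) (fun b => star (R b j))) *ᵥ x))
        = ∑ j : k, star x ⬝ᵥ ((p j : ℂ) • ((vecMulVec (fun a => R a j) (fun b => star (R b j))) *ᵥ x)) := by
      simp only [dotProduct, Finset.sum_apply, Finset.mul_sum]
      exact Finset.sum_comm
    rw [hds]
    have : ∀ j : k, star x ⬝ᵥ ((p j : ℂ) • ((vecMulVec (fun a => R a j) (fun b => star (R b j))) *ᵥ x))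
        = (p j : ℂ) * (((lam : ℂ)⁻¹ * (lam : ℂ)⁻¹) * (Complex.normSq (w j) : ℂ)) := by
      intro j
      rw [dotProduct_smul, smul_eq_mul, hQx]
    rw [Finset.sum_congr rfl (fun j _ => this j)]
    have hww : star w ⬝ᵥ w = ((∑ j, Complex.normSq (w j) : ℝ) : ℂ) := by
      simp [dotProduct, Complex.normSq_eq_conj_mul_self]
    rw [hxx, hww]
    push_cast
    ring
  rw [hmain] at h0
  rw [Complex.zero_le_real] at h0
  have hl2 : (0:ℝ) < lam * lam := mul_pos hlam hlam
  have := mul_le_mul_of_nonneg_left (sub_nonneg.mp h0 :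
    ∑ j, p j * (lam⁻¹ * lam⁻¹ * Complex.normSq (w j)) ≤ lam⁻¹ * ∑ j, Complex.normSq (w j)) hl2.le
  calc ∑ j : k, p j * Complex.normSq (w j)
      = (lam * lam) * ∑ j, p j * (lam⁻¹ * lam⁻¹ * Complex.normSq (w j)) := by
        rw [Finset.mul_sum]
        refine Finset.sum_congr rfl fun j _ => ?_
        field_simp
    _ ≤ (lam * lam) * (lam⁻¹ * ∑ j, Complex.normSq (w j)) := this
    _ = lam * ∑ j, Complex.normSq (w j) := by field_simp

theorem stmt_19 {G Q : Type*} [Group G] [Fintype G] [DecidableEq G]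
    [Group Q] [Fintype Q] [DecidableEq Q] (n : ℕ)
    (ρ : G →* Matrix.unitaryGroup (Fin n) ℂ) (τ : Q →* Matrix.unitaryGroup (Fin n) ℂ)
    (φ : Fin n → ℂ)
    -- the representations commute up to a phase factor:
    (hcomm : ∀ (g : G) (k : Q), ∃ θ : ℝ,
      (ρ g : Matrix (Fin n) (Fin n) ℂ) * (τ k : Matrix (Fin n) (Fin n) ℂ) =
        Complex.exp (θ * Complex.I) •
          ((τ k : Matrix (Fin n) (Fin n) ℂ) * (ρ g : Matrix (Fin n) (Fin n) ℂ)))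
    -- the states are linearly independent:
    (hind : LinearIndependent ℂ (fun gk : G × Q =>
      ((ρ gk.1 : Matrix (Fin n) (Fin n) ℂ) * (τ gk.2 : Matrix (Fin n) (Fin n) ℂ)).mulVec φ))
    (lam : ℝ)
    -- `lam` is the smallest eigenvalue of the Gram matrix `ΦᴴΦ`:
    (hev : ∃ u : G × Q → ℂ, u ≠ 0 ∧
      ((cguMatrix n ρ τ φ)ᴴ * cguMatrix n ρ τ φ).mulVec u = (lam : ℂ) • u)
    (hmin : (((cguMatrix n ρ τ φ)ᴴ * cguMatrix n ρ τ φ) - (lam : ℂ) • 1).PosSemidef) :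
    cguPrimalFeasible n ρ τ φ (fun _ => lam) ∧
      ∀ p : G × Q → ℝ, cguPrimalFeasible n ρ τ φ p →
        (1 / ((Fintype.card G : ℝ) * (Fintype.card Q : ℝ))) * ∑ gk : G × Q, p gk ≤ lam := by
  classical
  set A := cguMatrix n ρ τ φ with hA
  have hind' : LinearIndependent ℂ (fun j : G × Q => fun i => A i j) := hind
  have hpd : (Aᴴ * A).PosDef := gram_posDef A hind'
  obtain ⟨u, hu0, huev⟩ := hev
  set N : ℝ := ∑ j : G × Q, Complex.normSq (u j) with hN
  have hNpos : 0 < N := by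
    obtain ⟨i, hi⟩ := Function.ne_iff.mp hu0
    exact Finset.sum_pos' (fun _ _ => Complex.normSq_nonneg _)
      ⟨i, Finset.mem_univ i, Complex.normSq_pos.mpr hi⟩
  have huu : star u ⬝ᵥ u = ((N : ℝ) : ℂ) := by
    simp [dotProduct, hN, Complex.normSq_eq_conj_mul_self]
  have hlam : 0 < lam := by
    have hpd2 := (posDef_iff_dotProduct_mulVec.mp hpd).2 hu0
    rw [huev, dotProduct_smul, smul_eq_mul, huu,
      show (lam : ℂ) * ((N:ℝ):ℂ) = ((lam * N : ℝ) : ℂ) by push_cast; ring,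
      Complex.zero_lt_real] at hpd2
    nlinarith
  have hfeas1 : cguPrimalFeasible n ρ τ φ (fun _ => lam) := by
    refine ⟨fun _ => hlam.le, ?_⟩
    have hsum : (∑ gk : G × Q, ((lam : ℝ) : ℂ) • cguQop n ρ τ φ gk)
        = (lam : ℂ) • (A * (Aᴴ*A)⁻¹ * ((A * (Aᴴ*A)⁻¹)ᴴ)) := by
      ext a b
      simp only [cguQop, cguReciprocal, ← hA, Matrix.sum_apply, Matrix.smul_apply,
        Matrix.vecMulVec_apply, Matrix.mul_apply, Matrix.conjTranspose_apply, smul_eq_mul,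
        Finset.mul_sum]
    rw [hsum]
    exact feas_matrix A lam hpd hmin
  refine ⟨hfeas1, ?_⟩
  intro p hp
  -- per-(h,l) inequality
  have hper : ∀ hl : G × Q,
      ∑ gk : G × Q, p gk * Complex.normSq (u (hl.1⁻¹ * gk.1, hl.2⁻¹ * gk.2)) ≤ lam * N := by
    intro hl
    obtain ⟨w, hw, hwn⟩ := cgu_cov n ρ τ φ hcomm lam u huev hl.1 hl.2
    have hk := key_ineq A hpd lam hlam p hp.2 w hw
    have hsw : ∑ j : G × Q, Complex.normSq (w j) = N := by
      rw [Finset.sum_congr rfl (fun j _ => hwn j), hN]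
      exact Fintype.sum_equiv
        (Equiv.prodCongr (Equiv.mulLeft hl.1⁻¹) (Equiv.mulLeft hl.2⁻¹)) _ _ (fun j => rfl)
    calc ∑ gk : G × Q, p gk * Complex.normSq (u (hl.1⁻¹ * gk.1, hl.2⁻¹ * gk.2))
        = ∑ gk : G × Q, p gk * Complex.normSq (w gk) :=
          Finset.sum_congr rfl (fun gk _ => by rw [hwn gk])
      _ ≤ lam * ∑ j : G × Q, Complex.normSq (w j) := hk
      _ = lam * N := by rw [hsw]
  -- sum over all (h,l)
  have hsum2 : ∑ hl : G × Q, ∑ gk : G × Q,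
      p gk * Complex.normSq (u (hl.1⁻¹ * gk.1, hl.2⁻¹ * gk.2)) = (∑ gk : G × Q, p gk) * N := by
    rw [Finset.sum_comm]
    rw [Finset.sum_mul]
    refine Finset.sum_congr rfl fun gk _ => ?_
    rw [← Finset.mul_sum]
    congr 1
    rw [hN]
    exact Fintype.sum_equiv
      (Equiv.prodCongr ((Equiv.inv G).trans (Equiv.mulRight gk.1))
        ((Equiv.inv Q).trans (Equiv.mulRight gk.2))) _ _ (fun j => rfl)
  have hbound : (∑ gk : G × Q, p gk) * N
      ≤ ((Fintype.card G : ℝ) * (Fintype.card Q : ℝ)) * (lam * N) := by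
    rw [← hsum2]
    calc ∑ hl : G × Q, ∑ gk : G × Q, p gk * Complex.normSq (u (hl.1⁻¹ * gk.1, hl.2⁻¹ * gk.2))
        ≤ ∑ _hl : G × Q, lam * N := Finset.sum_le_sum fun hl _ => hper hl
      _ = ((Fintype.card G : ℝ) * (Fintype.card Q : ℝ)) * (lam * N) := by
        simp [Finset.sum_const, Fintype.card_prod]
  have hcard : (0:ℝ) < (Fintype.card G : ℝ) * (Fintype.card Q : ℝ) := by
    have h1 : 0 < Fintype.card G := Fintype.card_pos
    have h2 : 0 < Fintype.card Q := Fintype.card_pos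
    positivity
  rw [div_mul_eq_mul_div, div_le_iff₀ hcard]
  nlinarith
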